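/- Define x : ℕ → ℝ by x 0 = 1 − √3/2 and x (i+1) = 2·(x i)² / (1 − √3·(x i) + √(1 − 2√3·(x i) − (x i)²)); define d i = √((x (i+1))²/4 + (x i + (√3/2)·x (i+1))²), θ i = 2·arcsin(d i / 2), and a i = (x i · x (i+1))/4 − (θ i − sin (θ i))/2. Then 8.454·10⁻²¹ < a 3 < 8.455·10⁻²¹; in particular a 3 < 6·10⁻¹⁸, so Hansen's claim that the second region he removed has area 6·10⁻¹⁸ is incorrect. -/

import Mathlib

noncomputable section

/-- Hansen's recursively defined sequence of distances, in the numerically stable form. -/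
def xseq : ℕ → ℝ
  | 0 => 1 - Real.sqrt 3 / 2
  | i + 1 => 2 * (xseq i) ^ 2 /
      (1 - Real.sqrt 3 * xseq i + Real.sqrt (1 - 2 * Real.sqrt 3 * xseq i - (xseq i) ^ 2))

/-- The chord length of the arc in Hansen's sliver region. -/
def dseq (i : ℕ) : ℝ :=
  Real.sqrt ((xseq (i + 1)) ^ 2 / 4 + (xseq i + Real.sqrt 3 / 2 * xseq (i + 1)) ^ 2)

/-- The angle subtended by the chord at the center of the unit circle. -/
def θseq (i : ℕ) : ℝ := 2 * Real.arcsin (dseq i / 2)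

/-- The area of the region bounded by two line segments of lengths `x i` and `x (i+1)`
meeting at an interior angle of 150°, and an arc of a circle of radius 1. -/
def aseq (i : ℕ) : ℝ := xseq i * xseq (i + 1) / 4 - (θseq i - Real.sin (θseq i)) / 2

private lemma prod_lt {a b al ah bl bh : ℝ} (h1 : al < a) (h2 : a < ah)
    (h3 : bl < b) (h4 : b < bh) (h5 : 0 < al) (h6 : 0 < bl) :
    al * bl < a * b ∧ a * b < ah * bh := by
  constructor <;> nlinarith

private lemma aux_le_arcsin {t : ℝ} (h0 : 0 < t) (h1 : t ≤ 1/2) : t ≤ Real.arcsin t := by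
  refine (Real.le_arcsin_iff_sin_le' ⟨by nlinarith [Real.pi_gt_three], by nlinarith [Real.pi_gt_three]⟩).2 ?_
  exact (Real.sin_lt h0).le

private lemma aux_arcsin_le {t : ℝ} (h0 : 0 < t) (h1 : t ≤ 1/2) :
    Real.arcsin t ≤ t + t^3 := by
  have hu1 : t + t^3 ≤ 1 := by nlinarith [pow_le_pow_left₀ h0.le h1 3]
  have hupos : (0:ℝ) < t + t^3 := by positivity
  have hpi : t + t^3 < Real.pi / 2 := by nlinarith [Real.pi_gt_three]
  have hsin := Real.sin_gt_sub_cube hupos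
  have hkey : (t + t^3)^3 ≤ 4 * t^3 := by
    nlinarith [sq_nonneg t, sq_nonneg (t*t), mul_pos (mul_pos h0 h0) h0,
      sq_nonneg (t*t*t), sq_nonneg (t*t*t*t), mul_pos h0 h0]
  refine (Real.arcsin_le_iff_le_sin' ⟨by nlinarith [Real.pi_gt_three], hpi⟩).2 ?_
  nlinarith [hsin, hkey, pow_pos h0 3]

set_option maxHeartbeats 2000000 in
/-- The second region Hansen removed has area about `8.454·10⁻²¹`; in particular it is
smaller than the `6·10⁻¹⁸` he claimed. -/
theorem hansen_second_region_area :
    (8.454e-21 < aseq 3 ∧ aseq 3 < 8.455e-21) ∧ aseq 3 < 6e-18 := by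
  have hs3 : (17320508075e-10:ℝ) < Real.sqrt 3 ∧ Real.sqrt 3 < 17320508076e-10 := by
    constructor
    · rw [show (17320508075e-10:ℝ) = (17320508075e-10:ℝ) from rfl]
      exact (Real.lt_sqrt (by norm_num)).2 (by norm_num)
    · exact (Real.sqrt_lt' (by norm_num)).2 (by norm_num)
  obtain ⟨hs3l, hs3h⟩ := hs3
  have hx0 : (1339745962e-10:ℝ) < xseq 0 ∧ xseq 0 < 13397459625e-11 := by
    rw [show xseq 0 = 1 - Real.sqrt 3 / 2 from rfl]
    constructor <;> linarith only [hs3l, hs3h]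
  obtain ⟨hx0l, hx0h⟩ := hx0
  have hx0p : (0:ℝ) < xseq 0 := by linarith only [hx0l]
  have hsx0 := prod_lt hs3l hs3h hx0l hx0h (by norm_num) (by norm_num)
  have hxx0 := prod_lt hx0l hx0h hx0l hx0h (by norm_num) (by norm_num)
  have hR0 : (5179491922942566e-16:ℝ) < 1 - 2 * Real.sqrt 3 * xseq 0 - (xseq 0)^2 ∧ 1 - 2 * Real.sqrt 3 * xseq 0 - (xseq 0)^2 < 5179491925076541e-16 := by
    constructor <;> linarith only [hsx0.1, hsx0.2, hxx0.1, hxx0.2, pow_two (xseq 0)]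
  have hS0 : (719686871e-9:ℝ) < Real.sqrt (1 - 2 * Real.sqrt 3 * xseq 0 - (xseq 0)^2) ∧ Real.sqrt (1 - 2 * Real.sqrt 3 * xseq 0 - (xseq 0)^2) < 7196868712e-10 := by
    constructor
    · exact (Real.lt_sqrt (by norm_num)).2 (by linarith only [hR0.1])
    · exact (Real.sqrt_lt' (by norm_num)).2 (by linarith only [hR0.2])
  have hD0 : (14876360633673035e-16:ℝ) < 1 - Real.sqrt 3 * xseq 0 + Real.sqrt (1 - 2 * Real.sqrt 3 * xseq 0 - (xseq 0)^2) ∧ 1 - Real.sqrt 3 * xseq 0 + Real.sqrt (1 - 2 * Real.sqrt 3 * xseq 0 - (xseq 0)^2) < 14876360636673036e-16 := by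
    constructor <;> linarith only [hsx0.1, hsx0.2, hS0.1, hS0.2]
  have hx1 : (24131160658615532e-18:ℝ) < xseq 1 ∧ xseq 1 < 24131160681493622e-18 := by
    have e : xseq 1 = 2 * (xseq 0) ^ 2 / (1 - Real.sqrt 3 * xseq 0 + Real.sqrt (1 - 2 * Real.sqrt 3 * xseq 0 - (xseq 0)^2)) := rfl
    rw [e]
    have hDpos : (0:ℝ) < 1 - Real.sqrt 3 * xseq 0 + Real.sqrt (1 - 2 * Real.sqrt 3 * xseq 0 - (xseq 0)^2) := by linarith only [hD0.1]
    constructor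
    · rw [lt_div_iff₀ hDpos]
      nlinarith only [hD0.2, hxx0.1, pow_two (xseq 0)]
    · rw [div_lt_iff₀ hDpos]
      nlinarith only [hD0.1, hxx0.2, pow_two (xseq 0)]
  obtain ⟨hx1l, hx1h⟩ := hx1
  have hx1p : (0:ℝ) < xseq 1 := by linarith only [hx1l]
  have hsx1 := prod_lt hs3l hs3h hx1l hx1h (by norm_num) (by norm_num)
  have hxx1 := prod_lt hx1l hx1h hx1l hx1h (by norm_num) (by norm_num)
  have hR1 : (9158248943907511e-16:ℝ) < 1 - 2 * Real.sqrt 3 * xseq 1 - (xseq 1)^2 ∧ 1 - 2 * Real.sqrt 3 * xseq 1 - (xseq 1)^2 < 9158248944759336e-16 := by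
    constructor <;> linarith only [hsx1.1, hsx1.2, hxx1.1, hxx1.2, pow_two (xseq 1)]
  have hS1 : (9569874055e-10:ℝ) < Real.sqrt (1 - 2 * Real.sqrt 3 * xseq 1 - (xseq 1)^2) ∧ Real.sqrt (1 - 2 * Real.sqrt 3 * xseq 1 - (xseq 1)^2) < 9569874056e-10 := by
    constructor
    · exact (Real.lt_sqrt (by norm_num)).2 (by linarith only [hR1.1])
    · exact (Real.sqrt_lt' (by norm_num)).2 (by linarith only [hR1.2])
  have hD1 : (19151910091532936e-16:ℝ) < 1 - Real.sqrt 3 * xseq 1 + Real.sqrt (1 - 2 * Real.sqrt 3 * xseq 1 - (xseq 1)^2) ∧ 1 - Real.sqrt 3 * xseq 1 + Real.sqrt (1 - 2 * Real.sqrt 3 * xseq 1 - (xseq 1)^2) < 19151910092953328e-16 := by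
    constructor <;> linarith only [hsx1.1, hsx1.2, hS1.1, hS1.2]
  have hx2 : (60809904798599459e-20:ℝ) < xseq 2 ∧ xseq 2 < 60809904918413794e-20 := by
    have e : xseq 2 = 2 * (xseq 1) ^ 2 / (1 - Real.sqrt 3 * xseq 1 + Real.sqrt (1 - 2 * Real.sqrt 3 * xseq 1 - (xseq 1)^2)) := rfl
    rw [e]
    have hDpos : (0:ℝ) < 1 - Real.sqrt 3 * xseq 1 + Real.sqrt (1 - 2 * Real.sqrt 3 * xseq 1 - (xseq 1)^2) := by linarith only [hD1.1]
    constructor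
    · rw [lt_div_iff₀ hDpos]
      nlinarith only [hD1.2, hxx1.1, pow_two (xseq 1)]
    · rw [div_lt_iff₀ hDpos]
      nlinarith only [hD1.1, hxx1.2, pow_two (xseq 1)]
  obtain ⟨hx2l, hx2h⟩ := hx2
  have hx2p : (0:ℝ) < xseq 2 := by linarith only [hx2l]
  have hsx2 := prod_lt hs3l hs3h hx2l hx2h (by norm_num) (by norm_num)
  have hxx2 := prod_lt hx2l hx2h hx2l hx2h (by norm_num) (by norm_num)
  have hR2 : (997893113317066e-15:ℝ) < 1 - 2 * Real.sqrt 3 * xseq 2 - (xseq 2)^2 ∧ 1 - 2 * Real.sqrt 3 * xseq 2 - (xseq 2)^2 < 9978931133213396e-16 := by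
    constructor <;> linarith only [hsx2.1, hsx2.2, hxx2.1, hxx2.2, pow_two (xseq 2)]
  have hS2 : (9989460012e-10:ℝ) < Real.sqrt (1 - 2 * Real.sqrt 3 * xseq 2 - (xseq 2)^2) ∧ Real.sqrt (1 - 2 * Real.sqrt 3 * xseq 2 - (xseq 2)^2) < 9989460013e-10 := by
    constructor
    · exact (Real.lt_sqrt (by norm_num)).2 (by linarith only [hR2.1])
    · exact (Real.sqrt_lt' (by norm_num)).2 (by linarith only [hR2.2])
  have hD2 : (19978927427507598e-16:ℝ) < 1 - Real.sqrt 3 * xseq 2 + Real.sqrt (1 - 2 * Real.sqrt 3 * xseq 2 - (xseq 2)^2) ∧ 1 - Real.sqrt 3 * xseq 2 + Real.sqrt (1 - 2 * Real.sqrt 3 * xseq 2 - (xseq 2)^2) < 19978927428528959e-16 := by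
    constructor <;> linarith only [hsx2.1, hsx2.2, hS2.1, hS2.2]
  have hx3 : (37017447856929328e-23:ℝ) < xseq 3 ∧ xseq 3 < 37017448004693393e-23 := by
    have e : xseq 3 = 2 * (xseq 2) ^ 2 / (1 - Real.sqrt 3 * xseq 2 + Real.sqrt (1 - 2 * Real.sqrt 3 * xseq 2 - (xseq 2)^2)) := rfl
    rw [e]
    have hDpos : (0:ℝ) < 1 - Real.sqrt 3 * xseq 2 + Real.sqrt (1 - 2 * Real.sqrt 3 * xseq 2 - (xseq 2)^2) := by linarith only [hD2.1]
    constructor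
    · rw [lt_div_iff₀ hDpos]
      nlinarith only [hD2.2, hxx2.1, pow_two (xseq 2)]
    · rw [div_lt_iff₀ hDpos]
      nlinarith only [hD2.1, hxx2.2, pow_two (xseq 2)]
  obtain ⟨hx3l, hx3h⟩ := hx3
  have hx3p : (0:ℝ) < xseq 3 := by linarith only [hx3l]
  have hsx3 := prod_lt hs3l hs3h hx3l hx3h (by norm_num) (by norm_num)
  have hxx3 := prod_lt hx3l hx3h hx3l hx3h (by norm_num) (by norm_num)
  have hR3 : (9999987176778487e-16:ℝ) < 1 - 2 * Real.sqrt 3 * xseq 3 - (xseq 3)^2 ∧ 1 - 2 * Real.sqrt 3 * xseq 3 - (xseq 3)^2 < 999998717677854e-15 := by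
    constructor <;> linarith only [hsx3.1, hsx3.2, hxx3.1, hxx3.2, pow_two (xseq 3)]
  have hS3 : (9999993588e-10:ℝ) < Real.sqrt (1 - 2 * Real.sqrt 3 * xseq 3 - (xseq 3)^2) ∧ Real.sqrt (1 - 2 * Real.sqrt 3 * xseq 3 - (xseq 3)^2) < 9999993589e-10 := by
    constructor
    · exact (Real.lt_sqrt (by norm_num)).2 (by linarith only [hR3.1])
    · exact (Real.sqrt_lt' (by norm_num)).2 (by linarith only [hR3.2])
  have hD3 : (19999987176389928e-16:ℝ) < 1 - Real.sqrt 3 * xseq 3 + Real.sqrt (1 - 2 * Real.sqrt 3 * xseq 3 - (xseq 3)^2) ∧ 1 - Real.sqrt 3 * xseq 3 + Real.sqrt (1 - 2 * Real.sqrt 3 * xseq 3 - (xseq 3)^2) < 19999987177389955e-16 := by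
    constructor <;> linarith only [hsx3.1, hsx3.2, hS3.1, hS3.2]
  have hx4 : (13702923243766878e-29:ℝ) < xseq 4 ∧ xseq 4 < 13702923353849086e-29 := by
    have e : xseq 4 = 2 * (xseq 3) ^ 2 / (1 - Real.sqrt 3 * xseq 3 + Real.sqrt (1 - 2 * Real.sqrt 3 * xseq 3 - (xseq 3)^2)) := rfl
    rw [e]
    have hDpos : (0:ℝ) < 1 - Real.sqrt 3 * xseq 3 + Real.sqrt (1 - 2 * Real.sqrt 3 * xseq 3 - (xseq 3)^2) := by linarith only [hD3.1]
    constructor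
    · rw [lt_div_iff₀ hDpos]
      nlinarith only [hD3.2, hxx3.1, pow_two (xseq 3)]
    · rw [div_lt_iff₀ hDpos]
      nlinarith only [hD3.1, hxx3.2, pow_two (xseq 3)]
  obtain ⟨hx4l, hx4h⟩ := hx4
  have hx4p : (0:ℝ) < xseq 4 := by linarith only [hx4l]
  have hx34 := prod_lt hx3l hx3h hx4l hx4h (by norm_num) (by norm_num)
  have hs34 := prod_lt hs3l hs3h hx34.1 hx34.2 (by norm_num) (by norm_num)
  have hxx4 := prod_lt hx4l hx4h hx4l hx4h (by norm_num) (by norm_num)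
  have hss : Real.sqrt 3 * Real.sqrt 3 = 3 := Real.mul_self_sqrt (by norm_num)
  have hrad : (xseq 4)^2/4 + (xseq 3 + Real.sqrt 3 / 2 * xseq 4)^2 = (xseq 4 * xseq 4)/4 + xseq 3 * xseq 3 + Real.sqrt 3 * (xseq 3 * xseq 4) + 3 * (xseq 4 * xseq 4) / 4 := by
    linear_combination (xseq 4 * xseq 4 / 4) * hss
  have hRd : (13702923244186726e-29:ℝ) < (xseq 4)^2/4 + (xseq 3 + Real.sqrt 3 / 2 * xseq 4)^2 ∧ (xseq 4)^2/4 + (xseq 3 + Real.sqrt 3 / 2 * xseq 4)^2 < 13702923353583805e-29 := by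
    rw [hrad]
    constructor <;> linarith only [hs34.1, hs34.2, hxx4.1, hxx4.2, hxx3.1, hxx3.2]
  have hd : (3701745972e-16:ℝ) < dseq 3 ∧ dseq 3 < 3701745988e-16 := by
    rw [show dseq 3 = Real.sqrt ((xseq 4)^2/4 + (xseq 3 + Real.sqrt 3 / 2 * xseq 4)^2) from rfl]
    constructor
    · exact (Real.lt_sqrt (by norm_num)).2 (by linarith only [hRd.1])
    · exact (Real.sqrt_lt' (by norm_num)).2 (by linarith only [hRd.2])
  obtain ⟨hdl, hdh⟩ := hd
  have hdp : (0:ℝ) < dseq 3 := by linarith only [hdl]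
  have hpi2 : (1:ℝ) < Real.pi / 2 := by linarith only [Real.pi_gt_three]
  have hθdef : θseq 3 = 2 * Real.arcsin (dseq 3 / 2) := rfl
  have hθl : dseq 3 ≤ θseq 3 := by
    rw [hθdef]
    have h := aux_le_arcsin (t := dseq 3 / 2) (by linarith only [hdl]) (by linarith only [hdh])
    linarith only [h]
  have hθh : θseq 3 ≤ dseq 3 + (dseq 3)^3 / 4 := by
    rw [hθdef]
    have h := aux_arcsin_le (t := dseq 3 / 2) (by linarith only [hdl]) (by linarith only [hdh])
    nlinarith only [h]
  have hθb : (3701745972e-16:ℝ) < θseq 3 ∧ θseq 3 < 37017459880001269e-23 := by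
    constructor
    · linarith only [hθl, hdl]
    · have h3 := pow_lt_pow_left₀ hdh (le_of_lt hdp) (show 3 ≠ 0 by norm_num)
      have : (3701745988e-16:ℝ)^3 < 50724741570545067e-36 := by norm_num
      linarith only [hθh, h3, this, hdh]
  obtain ⟨hθbl, hθbh⟩ := hθb
  have hθp : (0:ℝ) < θseq 3 := by linarith only [hθbl]
  have hsb := Real.sin_bound (x := θseq 3) (by rw [abs_of_pos hθp]; linarith only [hθbh])
  rw [abs_of_pos hθp] at hsb
  obtain ⟨hsb1, hsb2⟩ := abs_le.1 hsb
  have hP : (50724724666364529e-36:ℝ) < xseq 3 * xseq 4 ∧ xseq 3 * xseq 4 < 50724725276340735e-36 := by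
    exact ⟨by linarith only [hx34.1], by linarith only [hx34.2]⟩
  have hcubh : θseq 3 ^ 3 < 50724741570550284e-36 := by
    have := pow_lt_pow_left₀ hθbh (le_of_lt hθp) (show 3 ≠ 0 by norm_num)
    have h2 : (37017459880001269e-23:ℝ)^3 ≤ 50724741570550284e-36 := by norm_num
    linarith only [this, h2]
  have hcubl : (50724740912804747e-36:ℝ) < θseq 3 ^ 3 := by
    have := pow_lt_pow_left₀ hθbl (by norm_num : (0:ℝ) ≤ 3701745972e-16) (show 3 ≠ 0 by norm_num)
    have h2 : (50724740912804747e-36:ℝ) ≤ (3701745972e-16:ℝ)^3 := by norm_num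
    linarith only [this, h2]
  have hquh : θseq 3 ^ 4 < 18777010860112777e-42 := by
    have := pow_lt_pow_left₀ hθbh (le_of_lt hθp) (show 4 ≠ 0 by norm_num)
    have h2 : (37017459880001269e-23:ℝ)^4 ≤ 18777010860112777e-42 := by norm_num
    linarith only [this, h2]
  have hqul : (0:ℝ) ≤ θseq 3 ^ 4 := by positivity
  have hfive : θseq 3 ^ 5 ≤ θseq 3 ^ 4 := pow_le_pow_of_le_one hθp.le (by linarith only [hθbh]) (by norm_num)
  have hfl : (0:ℝ) ≤ θseq 3 ^ 5 := by positivity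
  have ha : aseq 3 = xseq 3 * xseq 4 / 4 - (θseq 3 - Real.sin (θseq 3)) / 2 := rfl
  refine ⟨⟨?_, ?_⟩, ?_⟩
  · rw [ha]; linarith only [hP.1, hP.2, hsb1, hsb2, hcubh, hcubl, hquh, hqul, hfive, hfl]
  · rw [ha]; linarith only [hP.1, hP.2, hsb1, hsb2, hcubh, hcubl, hquh, hqul, hfive, hfl]
  · rw [ha]; linarith only [hP.1, hP.2, hsb1, hsb2, hcubh, hcubl, hquh, hqul, hfive, hfl]
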